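/- Let d ≥ 2 and let S be a pointed affine semigroup in ℤ^d of full dimension d with normalization S̄ = ℤS ∩ ℝ_{≥0}S. Suppose every family of holes of S has dimension at least 1 (equivalently depth k[S] ≥ 2), and suppose v, v′ ∈ S with v′ − v ∈ S̄ \ S. Then there exists a face F of S of dimension ≥ 1 with an extremal ray l of F such that (v′ − v + ℤl) ∩ S = ∅. -/

import Mathlib

open Matrix

namespace HoleAux

variable {d : ℕ}




lemma lex_lt_def {x y : Fin d → ℚ} :
    toLex x < toLex y ↔ ∃ i, (∀ j, j < i → x j = y j) ∧ x i < y i := Iff.rfl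

lemma lex_le_def {x y : Fin d → ℚ} :
    toLex x ≤ toLex y ↔ x = y ∨ toLex x < toLex y := by
  rw [le_iff_lt_or_eq, or_comm]
  constructor
  · rintro (h | h)
    · exact Or.inl (toLex_inj.mp h)
    · exact Or.inr h
  · rintro (h | h)
    · exact Or.inl (by rw [h])
    · exact Or.inr h

lemma lex_smul_nonneg {r : ℚ} (hr : 0 ≤ r) {z : Fin d → ℚ}
    (hz : toLex (0 : Fin d → ℚ) ≤ toLex z) :
    toLex (0 : Fin d → ℚ) ≤ toLex (r • z) := by
  rcases lex_le_def.mp hz with h | h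
  · rw [lex_le_def]; left; rw [← h, smul_zero]
  · rcases eq_or_lt_of_le hr with hr0 | hr0
    · rw [lex_le_def]; left; rw [← hr0, zero_smul]
    · obtain ⟨i, hj, hi⟩ := lex_lt_def.mp h
      rw [lex_le_def]; right
      refine lex_lt_def.mpr ⟨i, fun j hlt => ?_, ?_⟩
      · have := hj j hlt
        simp only [Pi.zero_apply] at this ⊢
        simp [Pi.smul_apply, ← this]
      · simp only [Pi.zero_apply, Pi.smul_apply, smul_eq_mul] at hi ⊢
        exact mul_pos hr0 (by simpa using hi)

lemma lex_add_nonneg {x y : Fin d → ℚ}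
    (hx : toLex (0 : Fin d → ℚ) ≤ toLex x) (hy : toLex (0 : Fin d → ℚ) ≤ toLex y) :
    toLex (0 : Fin d → ℚ) ≤ toLex (x + y) := by
  rcases lex_le_def.mp hx with h | h
  · rwa [← h, zero_add]
  rcases lex_le_def.mp hy with h' | h'
  · rwa [← h', add_zero]
  obtain ⟨i, hj, hi⟩ := lex_lt_def.mp h
  obtain ⟨k, hj', hk⟩ := lex_lt_def.mp h'
  simp only [Pi.zero_apply] at hi hk hj hj'
  rw [lex_le_def]; right
  rcases lt_trichotomy i k with hik | hik | hik
  · refine lex_lt_def.mpr ⟨i, fun j hlt => ?_, ?_⟩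
    · simp only [Pi.zero_apply, Pi.add_apply]
      rw [← hj j hlt, ← hj' j (hlt.trans hik)]; ring
    · simp only [Pi.zero_apply, Pi.add_apply]
      have := hj' i hik
      rw [← this]; simpa using hi
  · subst hik
    refine lex_lt_def.mpr ⟨i, fun j hlt => ?_, ?_⟩
    · simp only [Pi.zero_apply, Pi.add_apply]
      rw [← hj j hlt, ← hj' j hlt]; ring
    · simp only [Pi.zero_apply, Pi.add_apply]
      have h1 : 0 < x i := by simpa using hi
      have h2 : 0 < y i := by simpa using hk
      linarith
  · refine lex_lt_def.mpr ⟨k, fun j hlt => ?_, ?_⟩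
    · simp only [Pi.zero_apply, Pi.add_apply]
      rw [← hj' j hlt, ← hj j (hlt.trans hik)]; ring
    · simp only [Pi.zero_apply, Pi.add_apply]
      have := hj k hik
      rw [← this]; simpa using hk

lemma lex_eq_zero_of_add {x y : Fin d → ℚ}
    (hx : toLex (0 : Fin d → ℚ) ≤ toLex x) (hy : toLex (0 : Fin d → ℚ) ≤ toLex y)
    (h : x + y = 0) : x = 0 := by
  rcases lex_le_def.mp hx with h1 | h1
  · exact h1.symm
  rcases lex_le_def.mp hy with h2 | h2
  · rw [← h2, add_zero] at h; exact h
  obtain ⟨i, hj, hi⟩ := lex_lt_def.mp h1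
  obtain ⟨k, hj', hk⟩ := lex_lt_def.mp h2
  simp only [Pi.zero_apply] at hi hk hj hj'
  exfalso
  rcases lt_trichotomy i k with hik | hik | hik
  · have hyi : y i = 0 := (hj' i hik).symm
    have := congrFun h i
    simp only [Pi.add_apply, Pi.zero_apply] at this
    rw [hyi, add_zero] at this
    rw [this] at hi; exact lt_irrefl 0 hi
  · subst hik
    have := congrFun h i
    simp only [Pi.add_apply, Pi.zero_apply] at this
    linarith
  · have hxk : x k = 0 := (hj k hik).symm
    have := congrFun h k
    simp only [Pi.add_apply, Pi.zero_apply] at this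
    rw [hxk, zero_add] at this
    rw [this] at hk; exact lt_irrefl 0 hk

lemma lex_sum_nonneg {γ : Type*} (A : Finset γ) (f : γ → (Fin d → ℚ))
    (h : ∀ g ∈ A, toLex (0 : Fin d → ℚ) ≤ toLex (f g)) :
    toLex (0 : Fin d → ℚ) ≤ toLex (∑ g ∈ A, f g) := by
  classical
  induction A using Finset.induction_on with
  | empty => simp
  | @insert a s ha ih =>
    rw [Finset.sum_insert ha]
    exact lex_add_nonneg (h a (Finset.mem_insert_self a s))
      (ih fun g hg => h g (Finset.mem_insert_of_mem hg))

lemma lex_sum_eq_zero {γ : Type*} (A : Finset γ) (f : γ → (Fin d → ℚ))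
    (h : ∀ g ∈ A, toLex (0 : Fin d → ℚ) ≤ toLex (f g))
    (hs : ∑ g ∈ A, f g = 0) : ∀ g ∈ A, f g = 0 := by
  classical
  induction A using Finset.induction_on with
  | empty => simp
  | @insert a s ha ih =>
    rw [Finset.sum_insert ha] at hs
    have h1 : ∀ g ∈ s, toLex (0 : Fin d → ℚ) ≤ toLex (f g) :=
      fun g hg => h g (Finset.mem_insert_of_mem hg)
    have hfa : f a = 0 :=
      lex_eq_zero_of_add (h a (Finset.mem_insert_self a s)) (lex_sum_nonneg s f h1) hs
    have hsum : ∑ g ∈ s, f g = 0 := by rw [hfa, zero_add] at hs; exact hs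
    intro g hg
    rcases Finset.mem_insert.mp hg with rfl | hg
    · exact hfa
    · exact ih h1 hsum g hg

lemma lex_sub_nonneg {x y : Fin d → ℚ} :
    toLex (0 : Fin d → ℚ) ≤ toLex (x - y) ↔ toLex y ≤ toLex x := by
  constructor
  · intro h
    rcases lex_le_def.mp h with h1 | h1
    · rw [lex_le_def]; left; exact (sub_eq_zero.mp h1.symm).symm
    · obtain ⟨i, hj, hi⟩ := lex_lt_def.mp h1
      simp only [Pi.zero_apply, Pi.sub_apply] at hi hj
      rw [lex_le_def]; right
      exact lex_lt_def.mpr ⟨i, fun j hlt => by have := hj j hlt; linarith,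
        by linarith⟩
  · intro h
    rcases lex_le_def.mp h with h1 | h1
    · rw [lex_le_def]; left; rw [h1]; simp
    · obtain ⟨i, hj, hi⟩ := lex_lt_def.mp h1
      rw [lex_le_def]; right
      exact lex_lt_def.mpr ⟨i, fun j hlt => by
        simp only [Pi.zero_apply, Pi.sub_apply]
        rw [hj j hlt]; ring, by
        simp only [Pi.zero_apply, Pi.sub_apply]
        linarith⟩






lemma lex_lt_def2 {x y : Fin d → ℚ} :
    toLex x < toLex y ↔ ∃ i, (∀ j, j < i → x j = y j) ∧ x i < y i := Iff.rfl

lemma lex_le_def2 {x y : Fin d → ℚ} :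
    toLex x ≤ toLex y ↔ x = y ∨ toLex x < toLex y := by
  rw [le_iff_lt_or_eq, or_comm]
  constructor
  · rintro (h | h)
    · exact Or.inl (toLex_inj.mp h)
    · exact Or.inr h
  · rintro (h | h)
    · exact Or.inl (by rw [h])
    · exact Or.inr h

lemma lex_total (x y : Fin d → ℚ) : toLex x ≤ toLex y ∨ toLex y ≤ toLex x := by
  have ht : IsTrichotomous (∀ _ : Fin d, ℚ) (Pi.Lex (· < ·) fun {_} => (· < ·)) :=
    Pi.isTrichotomous_lex _ _ (IsWellFounded.wf)
  rcases @trichotomous _ _ ht x y with h1 | h1 | h1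
  · exact Or.inl (lex_le_def2.mpr (Or.inr h1))
  · exact Or.inl (lex_le_def2.mpr (Or.inl h1))
  · exact Or.inr (lex_le_def2.mpr (Or.inr h1))

lemma exists_lex_max {γ : Type*} (A : Finset γ) (hA : A.Nonempty) (f : γ → (Fin d → ℚ)) :
    ∃ u ∈ A, ∀ g ∈ A, toLex (f g) ≤ toLex (f u) := by
  classical
  induction A using Finset.induction_on with
  | empty => exact absurd hA (by simp)
  | @insert a s ha ih =>
    rcases Finset.eq_empty_or_nonempty s with rfl | hs
    · exact ⟨a, Finset.mem_insert_self a _, by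
        intro g hg
        rcases Finset.mem_insert.mp hg with rfl | hg
        · exact le_refl _
        · exact absurd hg (by simp)⟩
    · obtain ⟨u, huS, hu⟩ := ih hs
      rcases lex_total (f a) (f u) with h | h
      · refine ⟨u, Finset.mem_insert_of_mem huS, ?_⟩
        intro g hg
        rcases Finset.mem_insert.mp hg with rfl | hg
        · exact h
        · exact hu g hg
      · refine ⟨a, Finset.mem_insert_self a _, ?_⟩
        intro g hg
        rcases Finset.mem_insert.mp hg with rfl | hg
        · exact le_refl _
        · exact le_trans (hu g hg) h

lemma dot_sum {γ : Type*} (w : Fin d → ℚ) (A : Finset γ) (f : γ → (Fin d → ℚ)) :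
    w ⬝ᵥ (∑ g ∈ A, f g) = ∑ g ∈ A, w ⬝ᵥ f g :=
  map_sum (AddMonoidHom.mk' (fun z => w ⬝ᵥ z) (fun a b => dotProduct_add w a b)) f A

lemma dot_self_pos {x : Fin d → ℚ} (hx : x ≠ 0) : 0 < x ⬝ᵥ x := by
  obtain ⟨i, hi⟩ : ∃ i, x i ≠ 0 := by
    by_contra h; push_neg at h; exact hx (funext h)
  exact Finset.sum_pos' (fun j _ => mul_self_nonneg (x j))
    ⟨i, Finset.mem_univ i, mul_self_pos.mpr hi⟩

/-- Farkas lemma: if `x` is not a nonnegative combination of the `v i`, there is a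
linear functional nonnegative on all `v i` and negative at `x`. -/
lemma farkas : ∀ (n : ℕ) (v : Fin n → (Fin d → ℚ)) (x : Fin d → ℚ),
    (¬ ∃ μ : Fin n → ℚ, (∀ i, 0 ≤ μ i) ∧ x = ∑ i, μ i • v i) →
    ∃ w : Fin d → ℚ, (∀ i, 0 ≤ w ⬝ᵥ v i) ∧ w ⬝ᵥ x < 0 := by
  intro n
  induction n with
  | zero =>
    intro v x hx
    have hx0 : x ≠ 0 := by
      intro h
      exact hx ⟨fun i => 0, fun i => le_refl 0, by simp [h]⟩
    refine ⟨-x, fun i => i.elim0, ?_⟩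
    rw [neg_dotProduct, neg_lt_zero]
    exact dot_self_pos hx0
  | succ n ih =>
    intro v x H
    set g : Fin d → ℚ := v (Fin.last n) with hgdef
    set B : Fin n → (Fin d → ℚ) := fun i => v i.castSucc with hBdef
    have h1 : ¬ ∃ μ : Fin n → ℚ, (∀ i, 0 ≤ μ i) ∧ x = ∑ i, μ i • B i := by
      rintro ⟨μ, hμ, hsum⟩
      refine H ⟨Fin.snoc μ 0, fun i => ?_, ?_⟩
      · refine Fin.lastCases ?_ ?_ i
        · simp
        · intro j; simp [Fin.snoc_castSucc]; exact hμ j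
      · rw [Fin.sum_univ_castSucc]
        simp only [Fin.snoc_castSucc, Fin.snoc_last, zero_smul, add_zero]
        exact hsum
    obtain ⟨w, hwB, hwx⟩ := ih B x h1
    by_cases hg : 0 ≤ w ⬝ᵥ g
    · refine ⟨w, fun i => ?_, hwx⟩
      refine Fin.lastCases ?_ ?_ i
      · exact hg
      · exact hwB
    push_neg at hg
    have hgne : w ⬝ᵥ g ≠ 0 := ne_of_lt hg
    -- project along g
    set p : (Fin d → ℚ) → (Fin d → ℚ) := fun z => (w ⬝ᵥ g) • z - (w ⬝ᵥ z) • g with hpdef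
    have hwp : ∀ z, w ⬝ᵥ p z = 0 := by
      intro z
      simp only [hpdef, dotProduct_sub, dotProduct_smul, smul_eq_mul]
      ring
    have h2 : ¬ ∃ μ : Fin n → ℚ, (∀ i, 0 ≤ μ i) ∧ p x = ∑ i, μ i • p (B i) := by
      rintro ⟨μ, hμ, hsum⟩
      -- unfold the sum
      have hsum' : (w ⬝ᵥ g) • x - (w ⬝ᵥ x) • g
          = (w ⬝ᵥ g) • (∑ i, μ i • B i) - (∑ i, μ i * (w ⬝ᵥ B i)) • g := by
        rw [show (w ⬝ᵥ g) • x - (w ⬝ᵥ x) • g = p x from rfl, hsum]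
        rw [Finset.smul_sum, Finset.sum_smul, ← Finset.sum_sub_distrib]
        apply Finset.sum_congr rfl
        intro i _
        simp only [hpdef, smul_sub, smul_smul]
        ring_nf
      set m : ℚ := ∑ i, μ i * (w ⬝ᵥ B i) with hmdef
      have hm0 : 0 ≤ m := Finset.sum_nonneg fun i _ => mul_nonneg (hμ i) (hwB i)
      set c : ℚ := (w ⬝ᵥ x - m) / (w ⬝ᵥ g) with hcdef
      have hc0 : 0 ≤ c := le_of_lt (div_pos_of_neg_of_neg (by linarith) hg)
      have hxeq : x = (∑ i, μ i • B i) + c • g := by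
        have h3 : (w ⬝ᵥ g) • x = (w ⬝ᵥ g) • ((∑ i, μ i • B i) + c • g) := by
          rw [smul_add, smul_smul, hcdef, mul_div_cancel₀ _ hgne]
          have : (w ⬝ᵥ g) • x = (w ⬝ᵥ g) • (∑ i, μ i • B i) - m • g + (w ⬝ᵥ x) • g := by
            rw [← hsum']; abel
          rw [this, sub_smul]; abel
        have h4 := congrArg (fun z => (w ⬝ᵥ g)⁻¹ • z) h3
        simpa [smul_smul, ← mul_assoc, inv_mul_cancel₀ hgne] using h4
      refine H ⟨Fin.snoc μ c, fun i => ?_, ?_⟩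
      · refine Fin.lastCases ?_ ?_ i
        · simpa using hc0
        · intro j; simpa using hμ j
      · rw [Fin.sum_univ_castSucc]
        simp only [Fin.snoc_castSucc, Fin.snoc_last]
        exact hxeq
    obtain ⟨w', hw'B, hw'x⟩ := ih (fun i => p (B i)) (p x) h2
    set w'' : Fin d → ℚ := (w ⬝ᵥ g) • w' - (w' ⬝ᵥ g) • w with hw''def
    have hkey : ∀ z, w'' ⬝ᵥ z = w' ⬝ᵥ p z := by
      intro z
      simp only [hw''def, hpdef, sub_dotProduct, smul_dotProduct, dotProduct_sub,
        dotProduct_smul, smul_eq_mul]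
      ring
    refine ⟨w'', fun i => ?_, ?_⟩
    · refine Fin.lastCases ?_ ?_ i
      · have hpg : p g = 0 := sub_self _
        have : w'' ⬝ᵥ g = 0 := by rw [hkey g, hpg, dotProduct_zero]
        rw [← hgdef, this]
      · intro j
        rw [show v j.castSucc = B j from rfl, hkey (B j)]
        exact hw'B j
    · rw [hkey x]; exact hw'x

/-- Gordan's theorem. -/
lemma gordan (n : ℕ) (v : Fin n → (Fin d → ℚ))
    (h : ∀ μ : Fin n → ℚ, (∀ i, 0 ≤ μ i) → ∑ i, μ i • v i = 0 → ∀ i, μ i = 0) :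
    ∃ w : Fin d → ℚ, ∀ i, 0 < w ⬝ᵥ v i := by
  induction n with
  | zero => exact ⟨0, fun i => i.elim0⟩
  | succ n ih =>
    set g : Fin d → ℚ := v (Fin.last n) with hgdef
    set B : Fin n → (Fin d → ℚ) := fun i => v i.castSucc with hBdef
    have hB : ∀ μ : Fin n → ℚ, (∀ i, 0 ≤ μ i) → ∑ i, μ i • B i = 0 → ∀ i, μ i = 0 := by
      intro μ hμ hsum i
      have := h (Fin.snoc μ 0) (fun j => Fin.lastCases (by simp) (fun k => by simpa using hμ k) j)
        (by rw [Fin.sum_univ_castSucc]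
            simp only [Fin.snoc_castSucc, Fin.snoc_last, zero_smul, add_zero]
            exact hsum) i.castSucc
      simpa using this
    obtain ⟨w, hw⟩ := ih B hB
    have hnc : ¬ ∃ μ : Fin n → ℚ, (∀ i, 0 ≤ μ i) ∧ -g = ∑ i, μ i • B i := by
      rintro ⟨μ, hμ, hsum⟩
      have := h (Fin.snoc μ 1) (fun j => Fin.lastCases (by simp) (fun k => by simpa using hμ k) j)
        (by rw [Fin.sum_univ_castSucc]
            simp only [Fin.snoc_castSucc, Fin.snoc_last, one_smul]
            rw [← hsum]; abel) (Fin.last n)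
      simp at this
    obtain ⟨w₂, hw₂B, hw₂g'⟩ := farkas n B (-g) hnc
    have hw₂g : 0 < w₂ ⬝ᵥ g := by
      rw [dotProduct_neg] at hw₂g'; linarith
    set ε : ℚ := (1 + |w ⬝ᵥ g|) / (w₂ ⬝ᵥ g) with hεdef
    have hε : 0 < ε := div_pos (by positivity) hw₂g
    refine ⟨w + ε • w₂, fun i => ?_⟩
    refine Fin.lastCases ?_ ?_ i
    · rw [← hgdef, add_dotProduct, smul_dotProduct, smul_eq_mul, hεdef,
        div_mul_cancel₀ _ (ne_of_gt hw₂g)]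
      have := abs_nonneg (w ⬝ᵥ g)
      have := neg_abs_le (w ⬝ᵥ g)
      linarith
    · intro j
      rw [show v j.castSucc = B j from rfl, add_dotProduct, smul_dotProduct, smul_eq_mul]
      have h1 := hw j
      have h2 := mul_nonneg (le_of_lt hε) (hw₂B j)
      linarith





/-- Coordinatewise cast `ℤ^d → ℚ^d`. -/
def e (x : Fin d → ℤ) : Fin d → ℚ := fun i => (x i : ℚ)

lemma e_add (x y : Fin d → ℤ) : e (x + y) = e x + e y := by
  funext i; simp [e]

lemma e_zero : e (0 : Fin d → ℤ) = 0 := by funext i; simp [e]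

lemma e_nsmul (k : ℕ) (x : Fin d → ℤ) : e (k • x) = (k : ℚ) • e x := by
  funext i; simp [e]

lemma e_inj {x y : Fin d → ℤ} (h : e x = e y) : x = y := by
  funext i
  have := congrFun h i
  simp only [e] at this
  exact_mod_cast this

lemma e_sum {γ : Type*} (A : Finset γ) (f : γ → (Fin d → ℤ)) :
    e (∑ g ∈ A, f g) = ∑ g ∈ A, e (f g) :=
  map_sum (AddMonoidHom.mk' e e_add) f A

lemma exists_nat_cast_eq (q : ℚ) (hq : 0 ≤ q) (N : ℕ) (hdvd : q.den ∣ N) :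
    ∃ k : ℕ, (k : ℚ) = q * N := by
  obtain ⟨m, hm⟩ := hdvd
  have hnum : 0 ≤ q.num := Rat.num_nonneg.mpr hq
  refine ⟨q.num.toNat * m, ?_⟩
  have hden : ((q.den : ℚ)) ≠ 0 := Nat.cast_ne_zero.mpr q.den_nz
  have h1 : (q * q.den : ℚ) = (q.num : ℚ) := by
    nth_rewrite 1 [← Rat.num_div_den q]
    exact div_mul_cancel₀ _ hden
  calc ((q.num.toNat * m : ℕ) : ℚ) = (q.num : ℚ) * m := by
        have h2 : ((q.num.toNat : ℚ)) = (q.num : ℚ) := by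
          exact_mod_cast Int.toNat_of_nonneg hnum
        push_cast
        rw [h2]
    _ = (q * q.den) * m := by rw [h1]
    _ = q * N := by rw [hm]; push_cast; ring


end HoleAux

/-- `F` is a face of the affine semigroup `S`. -/
def IsFaceOfSemigroup {d : ℕ} (S F : AddSubmonoid (Fin d → ℤ)) : Prop :=
  (F : Set (Fin d → ℤ)) ⊆ S ∧
    ∀ a ∈ S, ∀ b ∈ S, (a + b ∈ F ↔ a ∈ F ∧ b ∈ F)

open HoleAux

/-- Key combinatorial step from the proof of Theorem 3.5: let `S ⊆ ℤ^d` (`d ≥ 2`) be a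
pointed, finitely generated affine semigroup of full dimension `d`.  Assume every family
of holes of `S` has dimension at least `1` (equivalently `depth k[S] ≥ 2`); i.e., every
hole `w ∈ S̄ \ S` lies in a translated lattice `w + ℤF`, `F` a face of `S` of dimension
`≥ 1`, disjoint from `S`.  If `v, v' ∈ S` with `v' − v ∈ S̄ \ S`, then there exists a face
`F` of `S` of dimension `≥ 1` and an extremal ray `l` of `F` such that
`(v' − v + ℤl) ∩ S = ∅`. -/
theorem exists_extremal_ray_of_hole (d : ℕ) (hd : 2 ≤ d)
    (S : AddSubmonoid (Fin d → ℤ))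
    (hfg : ∃ G : Finset (Fin d → ℤ), AddSubmonoid.closure (G : Set (Fin d → ℤ)) = S)
    (hpointed : ∀ a ∈ S, -a ∈ S → a = 0)
    (hfull : Submodule.span ℚ ((fun v : Fin d → ℤ => (fun i => (v i : ℚ))) '' S) = ⊤)
    -- every family of holes has dimension at least one:
    (hholes : ∀ w : Fin d → ℤ,
      w ∈ AddSubgroup.closure (S : Set (Fin d → ℤ)) →
      (∃ q : (Fin d → ℤ) → ℚ, (∀ g, 0 ≤ q g) ∧ {g | q g ≠ 0}.Finite ∧ (∀ g, q g ≠ 0 → g ∈ S) ∧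
        (fun i => (w i : ℚ)) = ∑ᶠ g, q g • (fun i => (g i : ℚ))) →
      w ∉ S →
      ∃ F : AddSubmonoid (Fin d → ℤ), IsFaceOfSemigroup S F ∧ (∃ x ∈ F, x ≠ (0 : Fin d → ℤ)) ∧
        ∀ z ∈ AddSubgroup.closure (F : Set (Fin d → ℤ)), w + z ∉ S)
    (v v' : Fin d → ℤ) (hv : v ∈ S) (hv' : v' ∈ S)
    -- `v' − v` is a hole: it lies in the normalization `S̄ = ℤS ∩ ℝ≥0 S` but not in `S`
    (hgrp : v' - v ∈ AddSubgroup.closure (S : Set (Fin d → ℤ)))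
    (hcone : ∃ q : (Fin d → ℤ) → ℚ, (∀ g, 0 ≤ q g) ∧ {g | q g ≠ 0}.Finite ∧
      (∀ g, q g ≠ 0 → g ∈ S) ∧
      (fun i => ((v' - v) i : ℚ)) = ∑ᶠ g, q g • (fun i => (g i : ℚ)))
    (hnot : v' - v ∉ S) :
    ∃ F : AddSubmonoid (Fin d → ℤ), IsFaceOfSemigroup S F ∧
      (∃ x ∈ F, x ≠ (0 : Fin d → ℤ)) ∧
      ∃ l : AddSubmonoid (Fin d → ℤ), IsFaceOfSemigroup F l ∧
        (∃ u ∈ l, u ≠ (0 : Fin d → ℤ) ∧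
          ∀ x ∈ l, ∃ q : ℚ, 0 ≤ q ∧ (fun i => (x i : ℚ)) = q • (fun i => (u i : ℚ))) ∧
        ∀ z ∈ AddSubgroup.closure (l : Set (Fin d → ℤ)), v' - v + z ∉ S := by
  classical
  obtain ⟨F, hFface, hFx, hFdisj⟩ := hholes (v' - v) hgrp hcone hnot
  obtain ⟨G, hG⟩ := hfg
  set A : Finset (Fin d → ℤ) := G.filter (fun g => g ∈ F ∧ g ≠ 0) with hAdef
  have hAmem : ∀ g ∈ A, g ∈ F ∧ g ≠ 0 := by
    intro g hg
    exact (Finset.mem_filter.mp hg).2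
  -- every element of `F` is an ℕ-combination of the elements of `A`
  have hrep : ∀ f ∈ F, ∃ c : (Fin d → ℤ) → ℕ, f = ∑ g ∈ A, c g • g := by
    let M : AddSubmonoid (Fin d → ℤ) :=
      { carrier := {x | x ∈ S ∧ (x ∈ F → ∃ c : (Fin d → ℤ) → ℕ, x = ∑ g ∈ A, c g • g)}
        zero_mem' := ⟨S.zero_mem, fun _ => ⟨fun _ => 0, by simp⟩⟩
        add_mem' := by
          rintro a b ⟨haS, ha⟩ ⟨hbS, hb⟩
          refine ⟨S.add_mem haS hbS, fun hab => ?_⟩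
          obtain ⟨haF, hbF⟩ := (hFface.2 a haS b hbS).1 hab
          obtain ⟨ca, hca⟩ := ha haF
          obtain ⟨cb, hcb⟩ := hb hbF
          refine ⟨ca + cb, ?_⟩
          rw [hca, hcb, ← Finset.sum_add_distrib]
          exact Finset.sum_congr rfl fun g _ => by
            simp only [Pi.add_apply]
            rw [add_nsmul] }
    have hSM : S ≤ M := by
      rw [← hG]
      apply AddSubmonoid.closure_le.mpr
      intro g hg
      have hgS : g ∈ S := by rw [← hG]; exact AddSubmonoid.subset_closure hg
      refine ⟨hgS, fun hgF => ?_⟩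
      by_cases hg0 : g = 0
      · exact ⟨fun _ => 0, by simp [hg0]⟩
      · have hgA : g ∈ A := Finset.mem_filter.mpr ⟨hg, hgF, hg0⟩
        refine ⟨fun x => if x = g then 1 else 0, ?_⟩
        rw [Finset.sum_congr rfl (fun x _ => show (if x = g then (1:ℕ) else 0) • x
            = if x = g then x else 0 by split <;> simp)]
        rw [Finset.sum_ite_eq' A g (fun x => x)]
        simp [hgA]
    intro f hf
    exact (hSM (hFface.1 hf)).2 hf
  -- enumerate `A`
  set n : ℕ := A.card with hndef
  set en : Fin n → (Fin d → ℤ) := fun i => (A.equivFin.symm i : _) with hendef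
  have henA : ∀ i, en i ∈ A := fun i => (A.equivFin.symm i).2
  have hensurj : ∀ g ∈ A, ∃ i, en i = g := by
    intro g hg
    exact ⟨A.equivFin ⟨g, hg⟩, by simp [hendef]⟩
  -- Gordan hypothesis
  have hgor : ∀ μ : Fin n → ℚ, (∀ i, 0 ≤ μ i) → ∑ i, μ i • e (en i) = 0 → ∀ i, μ i = 0 := by
    intro μ hμ hsum i0
    by_contra hi0
    set N : ℕ := ∏ i, (μ i).den with hNdef
    have hNpos : 0 < N := Finset.prod_pos fun i _ => (μ i).pos
    choose k hk using fun i =>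
      exists_nat_cast_eq (μ i) (hμ i) N (Finset.dvd_prod_of_mem _ (Finset.mem_univ i))
    have hsum2 : ∑ i, (k i) • en i = 0 := by
      apply e_inj
      rw [e_sum, e_zero]
      have : ∀ i : Fin n, e (k i • en i) = (N : ℚ) • (μ i • e (en i)) := by
        intro i
        rw [e_nsmul, hk i, smul_smul, mul_comm]
      rw [Finset.sum_congr rfl fun i _ => this i, ← Finset.smul_sum, hsum, smul_zero]
    have hki0 : k i0 ≠ 0 := by
      intro h
      have := hk i0
      rw [h] at this
      simp only [Nat.cast_zero] at this
      have hμpos : 0 < μ i0 := lt_of_le_of_ne (hμ i0) (Ne.symm hi0)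
      have hNQ : (0:ℚ) < N := by exact_mod_cast hNpos
      nlinarith
    have hx : (k i0) • en i0 ∈ F := AddSubmonoid.nsmul_mem F (hAmem _ (henA i0)).1 _
    have hnegx : ∑ i ∈ Finset.univ.erase i0, k i • en i = -(k i0 • en i0) := by
      have h5 := Finset.add_sum_erase Finset.univ (fun i => k i • en i) (Finset.mem_univ i0)
      rw [hsum2] at h5
      exact eq_neg_of_add_eq_zero_right h5
    have hsF : ∑ i ∈ Finset.univ.erase i0, k i • en i ∈ F :=
      AddSubmonoid.sum_mem F fun i _ => AddSubmonoid.nsmul_mem F (hAmem _ (henA i)).1 _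
    have hzero : (k i0) • en i0 = 0 := by
      apply hpointed _ (hFface.1 hx)
      rw [← hnegx]
      exact hFface.1 hsF
    have : e (en i0) = 0 := by
      have h6 : e ((k i0) • en i0) = 0 := by rw [hzero, e_zero]
      rw [e_nsmul] at h6
      rcases smul_eq_zero.mp h6 with h7 | h7
      · exact absurd (Nat.cast_eq_zero.mp h7) hki0
      · exact h7
    exact (hAmem _ (henA i0)).2 (e_inj (by rw [this, e_zero]))
  -- a strictly positive functional on the generators
  obtain ⟨w, hwen⟩ := gordan n (fun i => e (en i)) hgor
  have hwA : ∀ g ∈ A, 0 < w ⬝ᵥ e g := by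
    intro g hg
    obtain ⟨i, rfl⟩ := hensurj g hg
    exact hwen i
  -- A is nonempty
  have hAne : A.Nonempty := by
    obtain ⟨x0, hx0F, hx0ne⟩ := hFx
    obtain ⟨c, hc⟩ := hrep x0 hx0F
    rcases Finset.eq_empty_or_nonempty A with h | h
    · rw [h, Finset.sum_empty] at hc
      exact absurd hc hx0ne
    · exact h
  -- choose the lex-largest normalized generator
  set nor : (Fin d → ℤ) → (Fin d → ℚ) := fun g => (w ⬝ᵥ e g)⁻¹ • e g with hnordef
  obtain ⟨u, huA, humax⟩ := exists_lex_max A hAne nor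
  have huF : u ∈ F := (hAmem u huA).1
  have hune : u ≠ 0 := (hAmem u huA).2
  have hwu : 0 < w ⬝ᵥ e u := hwA u huA
  -- the key extremality property
  have key : ∀ a ∈ F, ∀ b ∈ F, ∀ q : ℚ, 0 ≤ q → e a + e b = q • e u →
      ∃ r : ℚ, 0 ≤ r ∧ e a = r • e u := by
    intro a haF b hbF q hq0 hq
    obtain ⟨α, hα⟩ := hrep a haF
    obtain ⟨β, hβ⟩ := hrep b hbF
    have hea : e a = ∑ g ∈ A, ((α g : ℚ)) • e g := by
      rw [hα, e_sum]
      exact Finset.sum_congr rfl fun g _ => e_nsmul _ _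
    have heb : e b = ∑ g ∈ A, ((β g : ℚ)) • e g := by
      rw [hβ, e_sum]
      exact Finset.sum_congr rfl fun g _ => e_nsmul _ _
    set c : (Fin d → ℤ) → ℚ := fun g => ((α g + β g : ℕ) : ℚ) * (w ⬝ᵥ e g) with hcdef
    have hcnn : ∀ g ∈ A, 0 ≤ c g := fun g hg =>
      mul_nonneg (Nat.cast_nonneg _) (le_of_lt (hwA g hg))
    have h1 : ∑ g ∈ A, c g • nor g = q • e u := by
      rw [← hq, hea, heb, ← Finset.sum_add_distrib]
      apply Finset.sum_congr rfl
      intro g hg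
      have hne : (w ⬝ᵥ e g) ≠ 0 := ne_of_gt (hwA g hg)
      simp only [hcdef, hnordef, smul_smul]
      rw [mul_assoc, mul_inv_cancel₀ hne, mul_one]
      push_cast
      rw [add_smul]
    have h2 : ∑ g ∈ A, c g = q * (w ⬝ᵥ e u) := by
      have h3 := congrArg (fun z => w ⬝ᵥ z) h1
      simp only [dot_sum] at h3
      have h4 : ∀ g ∈ A, w ⬝ᵥ (c g • nor g) = c g := by
        intro g hg
        have hne : (w ⬝ᵥ e g) ≠ 0 := ne_of_gt (hwA g hg)
        simp only [hnordef, dotProduct_smul, smul_eq_mul]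
        rw [inv_mul_cancel₀ hne, mul_one]
      rw [Finset.sum_congr rfl h4] at h3
      rw [h3]
      rw [dotProduct_smul, smul_eq_mul]
    rcases eq_or_lt_of_le (mul_nonneg hq0 (le_of_lt hwu)) with ht0 | ht0
    · -- the total weight is zero, hence `a = 0`
      have hc0 : ∀ g ∈ A, c g = 0 :=
        (Finset.sum_eq_zero_iff_of_nonneg hcnn).mp (by rw [h2, ← ht0])
      refine ⟨0, le_refl 0, ?_⟩
      rw [hea, zero_smul]
      apply Finset.sum_eq_zero
      intro g hg
      have h3 := hc0 g hg
      simp only [hcdef] at h3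
      rcases mul_eq_zero.mp h3 with h4 | h4
      · have h5 : α g + β g = 0 := Nat.cast_eq_zero.mp h4
        have h6 : α g = 0 := Nat.eq_zero_of_add_eq_zero_right h5
        rw [h6, Nat.cast_zero, zero_smul]
      · exact absurd h4 (ne_of_gt (hwA g hg))
    · -- positive total weight
      set t : ℚ := q * (w ⬝ᵥ e u) with htdef
      have hclaim : ∀ g ∈ A, c g ≠ 0 → nor g = nor u := by
        intro g hgA hcg
        have hz : ∀ g' ∈ A, toLex (0 : Fin d → ℚ) ≤ toLex ((c g' / t) • (nor u - nor g')) :=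
          fun g' hg' => lex_smul_nonneg (div_nonneg (hcnn g' hg') (le_of_lt ht0))
            (lex_sub_nonneg.mpr (humax g' hg'))
        have hzsum : ∑ g' ∈ A, (c g' / t) • (nor u - nor g') = 0 := by
          rw [Finset.sum_congr rfl (fun g' _ => smul_sub (c g' / t) (nor u) (nor g')),
              Finset.sum_sub_distrib]
          have e1 : ∑ g' ∈ A, (c g' / t) • nor u = nor u := by
            rw [← Finset.sum_smul, ← Finset.sum_div, h2, div_self ht0.ne', one_smul]
          have e2 : ∑ g' ∈ A, (c g' / t) • nor g' = nor u := by
            have h5 : ∀ g' : Fin d → ℤ, (c g' / t) • nor g' = t⁻¹ • (c g' • nor g') := by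
              intro g'
              rw [div_eq_mul_inv, mul_comm, ← smul_smul]
            rw [Finset.sum_congr rfl (fun g' _ => h5 g'), ← Finset.smul_sum, h1, smul_smul]
            have hqne : q ≠ 0 := by
              intro h7
              rw [h7, zero_mul] at htdef
              rw [htdef] at ht0
              exact lt_irrefl 0 ht0
            have h6 : t⁻¹ * q = (w ⬝ᵥ e u)⁻¹ := by
              rw [htdef, mul_inv, mul_comm, ← mul_assoc, mul_inv_cancel₀ hqne, one_mul]
            rw [h6]
          rw [e1, e2, sub_self]
        have h7 := lex_sum_eq_zero A _ hz hzsum g hgA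
        have hne : c g / t ≠ 0 := div_ne_zero hcg ht0.ne'
        have h8 := (smul_eq_zero.mp h7).resolve_left hne
        exact (sub_eq_zero.mp h8).symm
      refine ⟨∑ g ∈ A, (α g : ℚ) * ((w ⬝ᵥ e g) * (w ⬝ᵥ e u)⁻¹), ?_, ?_⟩
      · apply Finset.sum_nonneg
        intro g hg
        exact mul_nonneg (Nat.cast_nonneg _)
          (mul_nonneg (le_of_lt (hwA g hg)) (inv_nonneg.mpr (le_of_lt hwu)))
      · rw [hea, Finset.sum_smul]
        apply Finset.sum_congr rfl
        intro g hg
        by_cases hαg : α g = 0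
        · rw [hαg]; simp
        · have hcg : c g ≠ 0 := by
            simp only [hcdef]
            apply mul_ne_zero
            · exact_mod_cast Nat.add_pos_left (Nat.pos_of_ne_zero hαg) _ |>.ne'
            · exact ne_of_gt (hwA g hg)
          have hng := hclaim g hg hcg
          rw [hnordef] at hng
          simp only at hng
          have hg2 : e g = ((w ⬝ᵥ e g) * (w ⬝ᵥ e u)⁻¹) • e u := by
            have h9 := congrArg (fun z => (w ⬝ᵥ e g) • z) hng
            rw [smul_smul, mul_inv_cancel₀ (hwA g hg).ne', one_smul, smul_smul] at h9
            exact h9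
          conv_lhs => rw [hg2]
          rw [smul_smul]
  -- the extremal ray as a submonoid
  refine ⟨F, hFface, hFx, ?_⟩
  set l : AddSubmonoid (Fin d → ℤ) :=
    { carrier := {x | x ∈ F ∧ ∃ r : ℚ, 0 ≤ r ∧ e x = r • e u}
      zero_mem' := ⟨F.zero_mem, 0, le_refl 0, by rw [e_zero, zero_smul]⟩
      add_mem' := by
        rintro x y ⟨hxF, rx, hrx, hex⟩ ⟨hyF, ry, hry, hey⟩
        exact ⟨F.add_mem hxF hyF, rx + ry, add_nonneg hrx hry,
          by rw [e_add, hex, hey, add_smul]⟩ } with hldef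
  have hlmem : ∀ x : Fin d → ℤ, x ∈ l ↔ x ∈ F ∧ ∃ r : ℚ, 0 ≤ r ∧ e x = r • e u :=
    fun x => Iff.rfl
  refine ⟨l, ⟨fun x hx => ((hlmem x).mp hx).1, ?_⟩, ⟨u, ?_, hune, ?_⟩, ?_⟩
  · intro a haF b hbF
    constructor
    · intro hab
      obtain ⟨habF, r, hr, hab'⟩ := (hlmem _).mp hab
      rw [e_add] at hab'
      obtain ⟨ra, hra, hear⟩ := key a haF b hbF r hr hab'
      obtain ⟨rb, hrb, hebr⟩ := key b hbF a haF r hr (by rw [add_comm]; exact hab')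
      exact ⟨(hlmem a).mpr ⟨haF, ra, hra, hear⟩, (hlmem b).mpr ⟨hbF, rb, hrb, hebr⟩⟩
    · rintro ⟨ha, hb⟩
      exact l.add_mem ha hb
  · exact (hlmem u).mpr ⟨huF, 1, zero_le_one, (one_smul ℚ (e u)).symm⟩
  · intro x hx
    obtain ⟨_, r, hr, hex⟩ := (hlmem x).mp hx
    exact ⟨r, hr, hex⟩
  · intro z hz
    apply hFdisj z
    exact AddSubgroup.closure_mono (fun x hx => ((hlmem x).mp hx).1) hz
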